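/- arXiv:1912.12802 — 2 statements merged into one kernel-verified Lean document; each statement's English description precedes it below -/
import Mathlib

section
/- Every strict unilateral improvement step strictly increases the potential: if player m deviates from s_m to s'_m ∈ S_m and Ũ_m(s'_m, s_{−m}) > Ũ_m(s), then Ψ(s'_m, s_{−m}) > Ψ(s). -/
open Finset

variable {ι V : Type*} [Fintype ι] [Nonempty ι] [DecidableEq ι] [Fintype V] [DecidableEq V]
variable {S : ι → Type*} [∀ m, Fintype (S m)] [∀ m, Nonempty (S m)]

/-- The congestion `z_v(s)`: the number of players whose strategy uses vertex `v`. -/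
def congestion (Vert : ∀ m : ι, S m → Finset V) (s : ∀ n, S n) (v : V) : ℕ :=
  (Finset.univ.filter fun n => v ∈ Vert n (s n)).card

/-- The reward part `Ũ^V_m(s)` of player `m`'s payoff. -/
def payoffV (Vert : ∀ m : ι, S m → Finset V) (ϱ : V → ℕ → ℝ) (m : ι) (s : ∀ n, S n) : ℝ :=
  ∑ v ∈ Vert m (s m), ϱ v (congestion Vert s v)

/-- Player `m`'s payoff `Ũ_m(s) = Σ_{v ∈ Vert(s_m)} ϱ_v(z_v(s)) − c_m(s_m)`. -/
def payoff (Vert : ∀ m : ι, S m → Finset V) (ϱ : V → ℕ → ℝ) (c : ∀ m : ι, S m → ℝ)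
    (m : ι) (s : ∀ n, S n) : ℝ :=
  payoffV Vert ϱ m s - c m (s m)

/-- The vertex part `Ψ^V(s) = Σ_{v ∈ V} Σ_{q=1}^{z_v(s)} ϱ_v(q)` of the potential. -/
def potentialV (Vert : ∀ m : ι, S m → Finset V) (ϱ : V → ℕ → ℝ) (s : ∀ n, S n) : ℝ :=
  ∑ v : V, ∑ q ∈ Finset.Icc 1 (congestion Vert s v), ϱ v q

/-- The potential `Ψ(s) = Σ_{v ∈ V} Σ_{q=1}^{z_v(s)} ϱ_v(q) − Σ_{n∈ι} c_n(s_n)`. -/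
def potential (Vert : ∀ m : ι, S m → Finset V) (ϱ : V → ℕ → ℝ) (c : ∀ m : ι, S m → ℝ)
    (s : ∀ n, S n) : ℝ :=
  potentialV Vert ϱ s - ∑ n : ι, c n (s n)

private lemma congestion_eq (Vert : ∀ m : ι, S m → Finset V) (s : ∀ n, S n) (m : ι) (v : V) :
    congestion Vert s v
      = ((Finset.univ.erase m).filter fun n => v ∈ Vert n (s n)).card
        + (if v ∈ Vert m (s m) then 1 else 0) := by
  classical
  unfold congestion
  rw [Finset.card_filter, Finset.card_filter,
    ← Finset.add_sum_erase _ _ (Finset.mem_univ m)]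
  ring

private lemma filter_erase_update (Vert : ∀ m : ι, S m → Finset V) (s : ∀ n, S n)
    (m : ι) (s' : S m) (v : V) :
    ((Finset.univ.erase m).filter fun n => v ∈ Vert n (Function.update s m s' n))
      = ((Finset.univ.erase m).filter fun n => v ∈ Vert n (s n)) := by
  apply Finset.filter_congr
  intro n hn
  rw [Function.update_of_ne (Finset.ne_of_mem_erase hn)]

private lemma sum_Icc_diff (f : ℕ → ℝ) (k : ℕ) (a b : ℕ) (ha : a ≤ 1) (hb : b ≤ 1) :
    (∑ q ∈ Finset.Icc 1 (k + b), f q) - (∑ q ∈ Finset.Icc 1 (k + a), f q)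
      = (if b = 1 then f (k + b) else 0) - (if a = 1 then f (k + a) else 0) := by
  interval_cases a <;> interval_cases b <;>
    simp [Finset.sum_Icc_succ_top (Nat.succ_le_succ (Nat.zero_le k))]

/-- Every strict unilateral improvement step strictly increases the potential. -/
theorem improvement_increases_potential (Vert : ∀ m : ι, S m → Finset V)
    (ϱ : V → ℕ → ℝ) (c : ∀ m : ι, S m → ℝ) (s : ∀ n, S n) (m : ι) (s' : S m)
    (h : payoff Vert ϱ c m s < payoff Vert ϱ c m (Function.update s m s')) :
    potential Vert ϱ c s < potential Vert ϱ c (Function.update s m s') := by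
  classical
  set t := Function.update s m s' with ht
  have key : potential Vert ϱ c t - potential Vert ϱ c s
      = payoff Vert ϱ c m t - payoff Vert ϱ c m s := by
    have hc : (∑ n : ι, c n (t n)) - (∑ n : ι, c n (s n)) = c m (t m) - c m (s m) := by
      rw [← Finset.add_sum_erase _ (fun n => c n (t n)) (Finset.mem_univ m),
        ← Finset.add_sum_erase _ (fun n => c n (s n)) (Finset.mem_univ m)]
      have : ∀ n ∈ Finset.univ.erase m, c n (t n) = c n (s n) := fun n hn => by
        rw [ht, Function.update_of_ne (Finset.ne_of_mem_erase hn)]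
      rw [Finset.sum_congr rfl this]; ring
    have hV : potentialV Vert ϱ t - potentialV Vert ϱ s
        = payoffV Vert ϱ m t - payoffV Vert ϱ m s := by
      unfold potentialV payoffV
      have hA : ∀ (u : ∀ n, S n), (∑ v ∈ Vert m (u m), ϱ v (congestion Vert u v))
          = ∑ v : V, if v ∈ Vert m (u m) then ϱ v (congestion Vert u v) else 0 := by
        intro u
        rw [Finset.sum_ite_mem, Finset.univ_inter]
      rw [hA, hA, ← Finset.sum_sub_distrib, ← Finset.sum_sub_distrib]
      apply Finset.sum_congr rfl
      intro v _
      set k := ((Finset.univ.erase m).filter fun n => v ∈ Vert n (s n)).card with hk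
      have hzt : congestion Vert t v = k + (if v ∈ Vert m s' then 1 else 0) := by
        rw [congestion_eq Vert t m v, hk, ht, filter_erase_update, Function.update_self]
      have hzs : congestion Vert s v = k + (if v ∈ Vert m (s m) then 1 else 0) := by
        rw [congestion_eq Vert s m v]
      have htm : t m = s' := Function.update_self m s' s
      rw [hzt, hzs, htm,
        sum_Icc_diff (ϱ v) k (if v ∈ Vert m (s m) then 1 else 0)
          (if v ∈ Vert m s' then 1 else 0) (by split <;> simp) (by split <;> simp)]
      by_cases h1 : v ∈ Vert m s' <;> by_cases h2 : v ∈ Vert m (s m) <;> simp [h1, h2]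
    unfold potential payoff
    linarith [hc, hV]
  linarith [key]
end

section
/- Convergence of distributed improvement dynamics: starting from any strategy profile of the route selection game, every maximal sequence of unilateral strict payoff-improving deviations is finite, and its final profile is a pure Nash equilibrium, i.e., a profile from which no player can strictly increase its payoff by a unilateral deviation. In particular the distributed route selection scheme converges to a pure strategy Nash equilibrium within a finite number of iterations. -/
open Finset

variable {ι V : Type*} [Fintype ι] [Nonempty ι] [DecidableEq ι] [Fintype V] [DecidableEq V]
variable {S : ι → Type*} [∀ m, Fintype (S m)] [∀ m, Nonempty (S m)]

lemma congestion_split (Vert : ∀ m : ι, S m → Finset V) (m : ι) (s : ∀ n, S n) (v : V) :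
    congestion Vert s v =
      ((univ.erase m).filter fun n => v ∈ Vert n (s n)).card +
        (if v ∈ Vert m (s m) then 1 else 0) := by
  unfold congestion
  conv_lhs => rw [← Finset.insert_erase (Finset.mem_univ m)]
  rw [Finset.filter_insert]
  split_ifs with h
  · exact Finset.card_insert_of_notMem (by simp)
  · simp

lemma potential_diff (Vert : ∀ m : ι, S m → Finset V) (ϱ : V → ℕ → ℝ) (c : ∀ m : ι, S m → ℝ)
    (m : ι) (s : ∀ n, S n) (sm : S m) :
    potential Vert ϱ c (Function.update s m sm) - potential Vert ϱ c s =
      payoff Vert ϱ c m (Function.update s m sm) - payoff Vert ϱ c m s := by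
  set s' := Function.update s m sm with hs'
  have hne : ∀ n ∈ univ.erase m, s' n = s n := by
    intro n hn
    exact Function.update_of_ne (Finset.ne_of_mem_erase hn) _ _
  -- cost part
  have hcost : (∑ n : ι, c n (s' n)) - (∑ n : ι, c n (s n)) = c m (s' m) - c m (s m) := by
    rw [← Finset.sum_erase_add univ (fun n => c n (s' n)) (Finset.mem_univ m),
        ← Finset.sum_erase_add univ (fun n => c n (s n)) (Finset.mem_univ m),
        Finset.sum_congr rfl (fun n hn => by rw [hne n hn])]
    ring
  -- vertex part
  have hV : potentialV Vert ϱ s' - potentialV Vert ϱ s =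
      payoffV Vert ϱ m s' - payoffV Vert ϱ m s := by
    have hpay : ∀ (t : ∀ n, S n), payoffV Vert ϱ m t =
        ∑ v : V, (if v ∈ Vert m (t m) then ϱ v (congestion Vert t v) else 0) := by
      intro t
      rw [payoffV, Finset.sum_ite_mem, Finset.univ_inter]
    rw [hpay, hpay, potentialV, potentialV, ← Finset.sum_sub_distrib, ← Finset.sum_sub_distrib]
    refine Finset.sum_congr rfl fun v _ => ?_
    have hk : ((univ.erase m).filter fun n => v ∈ Vert n (s' n)).card =
        ((univ.erase m).filter fun n => v ∈ Vert n (s n)).card := by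
      congr 1
      exact Finset.filter_congr fun n hn => by rw [hne n hn]
    have h1 := congestion_split Vert m s' v
    have h2 := congestion_split Vert m s v
    rw [hk] at h1
    set k := ((univ.erase m).filter fun n => v ∈ Vert n (s n)).card with hkdef
    by_cases ha : v ∈ Vert m (s' m) <;> by_cases hb : v ∈ Vert m (s m) <;>
      simp only [ha, hb, if_true, if_false] at h1 h2 ⊢ <;>
      rw [h1, h2]
    · ring
    · rw [Finset.sum_Icc_succ_top (Nat.succ_le_succ (Nat.zero_le k))]
      ring
    · rw [Finset.sum_Icc_succ_top (Nat.succ_le_succ (Nat.zero_le k))]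
      ring
    · ring
  unfold potential payoff
  linarith [hcost, hV]

/-- Convergence of distributed improvement dynamics: (i) every sequence of unilateral
strict payoff-improving deviations is finite (no infinite improvement sequence exists);
(ii) any profile from which no player can strictly improve by a unilateral deviation
(the final profile of a maximal improvement sequence) is a pure Nash equilibrium;
(iii) consequently a pure strategy Nash equilibrium exists. -/
theorem distributed_improvement_converges (Vert : ∀ m : ι, S m → Finset V)
    (ϱ : V → ℕ → ℝ) (c : ∀ m : ι, S m → ℝ) :
    (¬ ∃ seq : ℕ → ∀ n, S n, ∀ t : ℕ, ∃ (m : ι) (s' : S m),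
        seq (t + 1) = Function.update (seq t) m s' ∧
        payoff Vert ϱ c m (seq t) < payoff Vert ϱ c m (seq (t + 1))) ∧
    (∀ sFinal : ∀ n, S n,
        (¬ ∃ (m : ι) (s' : S m),
          payoff Vert ϱ c m sFinal < payoff Vert ϱ c m (Function.update sFinal m s')) →
        ∀ (m : ι) (sm : S m),
          payoff Vert ϱ c m (Function.update sFinal m sm) ≤ payoff Vert ϱ c m sFinal) ∧
    (∃ sStar : ∀ n, S n, ∀ (m : ι) (sm : S m),
        payoff Vert ϱ c m (Function.update sStar m sm) ≤ payoff Vert ϱ c m sStar) := by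
  refine ⟨?_, ?_, ?_⟩
  · rintro ⟨seq, hseq⟩
    have hmono : StrictMono fun t => potential Vert ϱ c (seq t) := by
      apply strictMono_nat_of_lt_succ
      intro t
      obtain ⟨m, s', hupd, himp⟩ := hseq t
      have := potential_diff Vert ϱ c m (seq t) s'
      rw [← hupd] at this
      linarith
    have hinj : Function.Injective seq := by
      intro a b hab
      by_contra hne
      exact (hmono.injective.ne hne) (by simp [hab])
    obtain ⟨a, b, hne, heq⟩ := Finite.exists_ne_map_eq_of_infinite seq
    exact hne (hinj heq)
  · intro sFinal h m sm
    push_neg at h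
    exact h m sm
  · obtain ⟨sStar, hmax⟩ := Finite.exists_max (potential Vert ϱ c)
    refine ⟨sStar, fun m sm => ?_⟩
    have := potential_diff Vert ϱ c m sStar sm
    have h2 := hmax (Function.update sStar m sm)
    linarith
end
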